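/- If ν is strictly dominant, then f_ν : U_1 → U_1 is a bijection, and f_ν(U(o_L)) = U(o_L). -/

import Mathlib

noncomputable section

open Matrix

/-- The ε-adic valuation on `L = k̄((ε))`, with `val 0 = ∞`. -/
def val {K : Type*} [Field K] (x : LaurentSeries K) : WithTop ℤ := x.orderTop

/-- The uniformizer ε of the Laurent series field. -/
def eps (K : Type*) [Field K] : LaurentSeries K := HahnSeries.single 1 1

/-- `σ : L → L` is the Frobenius automorphism: it fixes ε and raises each Laurent-series
coefficient to the `q`-th power.  (This property determines `σ` uniquely.) -/
def IsFrobenius (K : Type*) [Field K] (q : ℕ)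
    (σ : LaurentSeries K → LaurentSeries K) : Prop :=
  ∀ (x : LaurentSeries K) (n : ℤ), (σ x).coeff n = (x.coeff n) ^ q

/-- Upper unitriangular matrix: an element of `U_1`. -/
def Unitri {K : Type*} [Field K] {n : ℕ}
    (g : Matrix (Fin n) (Fin n) (LaurentSeries K)) : Prop :=
  (∀ i, g i i = 1) ∧ (∀ i j : Fin n, j < i → g i j = 0)

/-- `ν = (ν_1, …, ν_n)` is strictly dominant: `ν_1 > ν_2 > … > ν_n`. -/
def StrictDominant {n : ℕ} (ν : Fin n → ℤ) : Prop :=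
  ∀ p q : Fin n, p < q → ν q < ν p

/-- The diagonal matrix `ε^ν = diag(ε^{ν_1}, …, ε^{ν_n})`. -/
def epsDiag (K : Type*) [Field K] {n : ℕ} (ν : Fin n → ℤ) :
    Matrix (Fin n) (Fin n) (LaurentSeries K) :=
  Matrix.diagonal fun i => eps K ^ (ν i)

/-- The map `f_ν : U_1 → U_1`, `f_ν(h) = h⁻¹ · ε^ν · σ(h) · ε^{−ν}`. -/
def fnu {K : Type*} [Field K] {n : ℕ} (σ : LaurentSeries K → LaurentSeries K)
    (ν : Fin n → ℤ) (g : Matrix (Fin n) (Fin n) (LaurentSeries K)) :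
    Matrix (Fin n) (Fin n) (LaurentSeries K) :=
  g⁻¹ * epsDiag K ν * g.map σ * epsDiag K (fun i => -ν i)

/-- The subgroup `U(o_L)` of `U_1`: unitriangular matrices with entries in `o_L`. -/
def UO (K : Type*) [Field K] (n : ℕ) :
    Set (Matrix (Fin n) (Fin n) (LaurentSeries K)) :=
  {g | Unitri g ∧ ∀ p q : Fin n, 0 ≤ val (g p q)}

/-- `U_N = {g ∈ U_1 : val(g_{pq}) ≥ (q−p)·N for all p < q}`
(equivalently `ε^{−μ}·U(o_L)·ε^{μ}` for `μ = (N, 2N, …, nN)`). -/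
def UN (K : Type*) [Field K] (n : ℕ) (N : ℤ) :
    Set (Matrix (Fin n) (Fin n) (LaurentSeries K)) :=
  {g | Unitri g ∧ ∀ p q : Fin n, p < q →
    ((((q : ℤ) - (p : ℤ)) * N : ℤ) : WithTop ℤ) ≤ val (g p q)}

/-- `U_{m,N} = {g ∈ U_1 : val(g_{pq}) ≥ (q−p)·N + m for all p < q}`. -/
def UmN (K : Type*) [Field K] (n : ℕ) (m N : ℤ) :
    Set (Matrix (Fin n) (Fin n) (LaurentSeries K)) :=
  {g | Unitri g ∧ ∀ p q : Fin n, p < q →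
    ((((q : ℤ) - (p : ℤ)) * N + m : ℤ) : WithTop ℤ) ≤ val (g p q)}

/-! ### Auxiliary material -/

namespace FnuAux

variable {K : Type*} [Field K]

/-- Laurent series with only nonneg-power coefficients. -/
def Nonneg (x : LaurentSeries K) : Prop := ∀ m : ℤ, m < 0 → x.coeff m = 0

lemma nonneg_iff {x : LaurentSeries K} : 0 ≤ val x ↔ Nonneg x := by
  constructor
  · intro h m hm
    refine HahnSeries.coeff_eq_zero_of_lt_orderTop (lt_of_lt_of_le ?_ h)
    exact_mod_cast hm
  · intro h
    by_cases hx : x = 0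
    · simp [val, hx]
    · rw [val, HahnSeries.zero_le_orderTop_iff]
      by_contra hlt
      exact (HahnSeries.coeff_order_eq_zero.not.mpr hx) (h _ (by omega))

lemma nonneg_zero : Nonneg (0 : LaurentSeries K) := fun _ _ => rfl

lemma nonneg_one : Nonneg (1 : LaurentSeries K) := by
  intro m hm
  rw [HahnSeries.coeff_one, if_neg (by omega)]

lemma nonneg_add {x y : LaurentSeries K} (hx : Nonneg x) (hy : Nonneg y) : Nonneg (x + y) := by
  intro m hm; rw [HahnSeries.coeff_add, hx m hm, hy m hm, add_zero]

lemma nonneg_neg {x : LaurentSeries K} (hx : Nonneg x) : Nonneg (-x) := by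
  intro m hm; rw [HahnSeries.coeff_neg, hx m hm, neg_zero]

lemma nonneg_mul {x y : LaurentSeries K} (hx : Nonneg x) (hy : Nonneg y) : Nonneg (x * y) := by
  intro m hm
  rw [HahnSeries.coeff_mul]
  refine Finset.sum_eq_zero fun ij hij => ?_
  rw [Finset.mem_addAntidiagonal] at hij
  obtain ⟨h1, h2, h3⟩ := hij
  rcases lt_or_ge ij.1 0 with h | h
  · exact absurd (hx _ h) h1
  · have : ij.2 < 0 := by omega
    exact absurd (hy _ this) h2

lemma nonneg_sum {ι : Type*} (s : Finset ι) (f : ι → LaurentSeries K)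
    (h : ∀ i ∈ s, Nonneg (f i)) : Nonneg (∑ i ∈ s, f i) :=
  Finset.sum_induction f Nonneg (fun _ _ => nonneg_add) nonneg_zero h

lemma nonneg_prod {ι : Type*} (s : Finset ι) (f : ι → LaurentSeries K)
    (h : ∀ i ∈ s, Nonneg (f i)) : Nonneg (∏ i ∈ s, f i) :=
  Finset.prod_induction f Nonneg (fun _ _ => nonneg_mul) nonneg_one h

lemma nonneg_single {a : ℤ} (ha : 0 ≤ a) (r : K) : Nonneg (HahnSeries.single a r) := by
  intro m hm; rw [HahnSeries.coeff_single_of_ne (by omega)]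

lemma eps_ne_zero : eps K ≠ 0 := HahnSeries.single_ne_zero one_ne_zero

lemma eps_zpow (d : ℤ) : eps K ^ d = HahnSeries.single d 1 := by
  have key : ∀ n : ℕ, eps K ^ (n : ℤ) = HahnSeries.single (n : ℤ) 1 := by
    intro n
    rw [zpow_natCast, eps, HahnSeries.single_pow, one_pow, nsmul_eq_mul, mul_one]
  rcases le_or_gt 0 d with h | h
  · obtain ⟨n, rfl⟩ := Int.eq_ofNat_of_zero_le h
    exact key n
  · obtain ⟨n, rfl⟩ : ∃ n : ℕ, d = -(n : ℤ) := ⟨d.natAbs, by omega⟩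
    rw [_root_.zpow_neg, key n]
    refine inv_eq_of_mul_eq_one_right ?_
    rw [HahnSeries.single_mul_single, one_mul, add_neg_cancel, HahnSeries.single_zero_one]

lemma single_mul_coeff (d : ℤ) (y : LaurentSeries K) (m : ℤ) :
    (HahnSeries.single d (1 : K) * y).coeff m = y.coeff (m - d) := by
  have := HahnSeries.coeff_single_mul_add (r := (1 : K)) (x := y) (a := m - d) (b := d)
  rw [sub_add_cancel] at this
  rw [this, one_mul]

section Sol

variable (p e : ℕ) [hp : Fact p.Prime] [CharP K p]

lemma Q_pos : 0 < p ^ e := pow_pos hp.out.pos e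

/-- the coefficient-level solution of `x - ε^d σ(x) = c`. -/
def solCoeff (d : ℤ) (c : LaurentSeries K) (m : ℤ) : K :=
  ∑ k ∈ Finset.range (m - c.order + 1).toNat, (c.coeff (m - d * k)) ^ (p ^ e) ^ k

lemma solCoeff_stable (d : ℤ) (hd : 1 ≤ d) (c : LaurentSeries K) (m : ℤ) (B : ℕ)
    (hB : (m - c.order + 1).toNat ≤ B) :
    solCoeff p e d c m = ∑ k ∈ Finset.range B, (c.coeff (m - d * k)) ^ (p ^ e) ^ k := by
  rw [solCoeff]
  refine Finset.sum_subset (Finset.range_subset_range.2 hB) fun k _ hk => ?_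
  rw [Finset.mem_range, not_lt] at hk
  have h1 : m - c.order + 1 ≤ (k : ℤ) := le_trans (Int.toNat_le.mp hk) (le_refl _)
  have h2 : (k : ℤ) ≤ d * k := le_mul_of_one_le_left (by positivity) hd
  have : m - d * k < c.order := by omega
  rw [HahnSeries.coeff_eq_zero_of_lt_order this, zero_pow (pow_pos (Q_pos p e) k).ne']

lemma solCoeff_supp (d : ℤ) (hd : 1 ≤ d) (c : LaurentSeries K) (m : ℤ)
    (h : solCoeff p e d c m ≠ 0) : c.order ≤ m := by
  obtain ⟨k, _, hk⟩ := Finset.exists_ne_zero_of_sum_ne_zero h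
  have hc : c.coeff (m - d * k) ≠ 0 := fun h0 => hk (by rw [h0, zero_pow (pow_pos (Q_pos p e) k).ne'])
  have := HahnSeries.order_le_of_coeff_ne_zero hc
  have h2 : (0:ℤ) ≤ d * k := by positivity
  omega

/-- The solution of `x - ε^d σ(x) = c`. -/
def sol (d : ℤ) (hd : 1 ≤ d) (c : LaurentSeries K) : LaurentSeries K :=
  HahnSeries.mk (solCoeff p e d c)
    (Set.IsWF.isPWO (BddBelow.wellFoundedOn_lt
      ⟨c.order, fun m hm => solCoeff_supp p e d hd c m hm⟩))

lemma sol_coeff (d : ℤ) (hd : 1 ≤ d) (c : LaurentSeries K) (m : ℤ) :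
    (sol p e d hd c).coeff m = solCoeff p e d c m := rfl

lemma sol_key (d : ℤ) (hd : 1 ≤ d) (c : LaurentSeries K) (m : ℤ) :
    (sol p e d hd c).coeff m - ((sol p e d hd c).coeff (m - d)) ^ (p ^ e) = c.coeff m := by
  set B := max (m - c.order + 1).toNat (m - d - c.order + 1).toNat with hB
  rw [sol_coeff, sol_coeff,
    solCoeff_stable p e d hd c m (B+1) (le_trans (le_max_left _ _) (Nat.le_succ _)),
    solCoeff_stable p e d hd c (m - d) B (le_max_right _ _)]
  rw [sum_pow_char_pow, Finset.sum_range_succ']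
  have h3 : ∀ k : ℕ, ((c.coeff (m - d - d * (k : ℤ))) ^ ((p ^ e) ^ k)) ^ (p ^ e)
      = (c.coeff (m - d * ((k : ℤ) + 1))) ^ (p ^ e) ^ (k + 1) := by
    intro k
    rw [← pow_mul, ← pow_succ]
    congr 2
    ring
  simp only [h3]
  push_cast
  rw [add_sub_cancel_left]
  simp

variable (σ : LaurentSeries K → LaurentSeries K)

lemma sol_spec (hσ : IsFrobenius K (p ^ e) σ) (d : ℤ) (hd : 1 ≤ d) (c : LaurentSeries K) :
    sol p e d hd c - eps K ^ d * σ (sol p e d hd c) = c := by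
  apply HahnSeries.coeff_inj.mp
  funext m
  rw [HahnSeries.coeff_sub, eps_zpow, single_mul_coeff, hσ, sol_key]

lemma sol_unique (hσ : IsFrobenius K (p ^ e) σ) (d : ℤ) (hd : 1 ≤ d) {x y : LaurentSeries K}
    (hxy : x - eps K ^ d * σ x = y - eps K ^ d * σ y) : x = y := by
  set z := x - y with hz
  have hcoef : ∀ m : ℤ, z.coeff m = (z.coeff (m - d)) ^ (p ^ e) := by
    intro m
    have h0 := congrArg (fun w : LaurentSeries K => w.coeff m) hxy
    simp only [HahnSeries.coeff_sub, eps_zpow, single_mul_coeff] at h0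
    rw [hσ, hσ] at h0
    have hsub : (x.coeff (m - d) - y.coeff (m - d)) ^ (p ^ e)
        = x.coeff (m - d) ^ (p ^ e) - y.coeff (m - d) ^ (p ^ e) := sub_pow_char_pow ..
    simp only [hz, HahnSeries.coeff_sub, hsub]
    linear_combination h0
  by_contra hne
  have hz0 : z ≠ 0 := sub_ne_zero.mpr hne
  have h1 := (HahnSeries.coeff_order_eq_zero.not.mpr hz0)
  have h2 : z.coeff (z.order - d) = 0 := HahnSeries.coeff_eq_zero_of_lt_order (by omega)
  rw [hcoef z.order, h2, zero_pow (Q_pos p e).ne'] at h1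
  exact h1 rfl

lemma sol_nonneg (d : ℤ) (hd : 1 ≤ d) (c : LaurentSeries K) (hc : Nonneg c) :
    Nonneg (sol p e d hd c) := by
  intro m hm
  rw [sol_coeff, solCoeff]
  refine Finset.sum_eq_zero fun k _ => ?_
  have h2 : (0:ℤ) ≤ d * k := by positivity
  rw [hc _ (by omega), zero_pow (pow_pos (Q_pos p e) k).ne']

lemma frob_zero (hσ : IsFrobenius K (p ^ e) σ) : σ 0 = 0 := by
  apply HahnSeries.coeff_inj.mp
  funext m
  rw [hσ, HahnSeries.coeff_zero, zero_pow (Q_pos p e).ne']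

lemma frob_one (hσ : IsFrobenius K (p ^ e) σ) : σ 1 = 1 := by
  apply HahnSeries.coeff_inj.mp
  funext m
  rw [hσ, HahnSeries.coeff_one]
  split
  · rw [one_pow]
  · rw [zero_pow (Q_pos p e).ne']

lemma frob_nonneg (hσ : IsFrobenius K (p ^ e) σ) {x : LaurentSeries K} (hx : Nonneg x) :
    Nonneg (σ x) := by
  intro m hm
  rw [hσ, hx m hm, zero_pow (Q_pos p e).ne']

end Sol

/-! ### Matrix lemmas -/

variable {n : ℕ}

lemma mul_entry_Icc {A B : Matrix (Fin n) (Fin n) (LaurentSeries K)}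
    (hA : ∀ i j : Fin n, j < i → A i j = 0) (hB : ∀ i j : Fin n, j < i → B i j = 0)
    {i j : Fin n} (hij : i ≤ j) :
    (A * B) i j = ∑ r ∈ Finset.Icc i j, A i r * B r j := by
  rw [Matrix.mul_apply]
  symm
  refine Finset.sum_subset (Finset.subset_univ _) fun r _ hr => ?_
  rw [Finset.mem_Icc, not_and_or, not_le, not_le] at hr
  rcases hr with h | h
  · rw [hA i r h, zero_mul]
  · rw [hB r j h, mul_zero]

lemma UT_mul {A B : Matrix (Fin n) (Fin n) (LaurentSeries K)}
    (hA : ∀ i j : Fin n, j < i → A i j = 0) (hB : ∀ i j : Fin n, j < i → B i j = 0)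
    {i j : Fin n} (hij : j < i) : (A * B) i j = 0 := by
  rw [Matrix.mul_apply]
  refine Finset.sum_eq_zero fun r _ => ?_
  rcases le_or_gt i r with h | h
  · rw [hB r j (lt_of_lt_of_le hij h), mul_zero]
  · rw [hA i r h, zero_mul]

lemma mul_diag {A B : Matrix (Fin n) (Fin n) (LaurentSeries K)}
    (hA : ∀ i j : Fin n, j < i → A i j = 0) (hB : ∀ i j : Fin n, j < i → B i j = 0)
    (i : Fin n) : (A * B) i i = A i i * B i i := by
  rw [mul_entry_Icc hA hB (le_refl i), Finset.Icc_self, Finset.sum_singleton]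

lemma Icc_eq_insert {i j : Fin n} (hij : i < j) :
    Finset.Icc i j = insert i (insert j (Finset.Ioo i j)) := by
  ext r
  simp only [Finset.mem_Icc, Finset.mem_insert, Finset.mem_Ioo]
  constructor
  · rintro ⟨h1, h2⟩
    rcases eq_or_lt_of_le h1 with h | h
    · exact Or.inl h.symm
    rcases eq_or_lt_of_le h2 with h' | h'
    · exact Or.inr (Or.inl h')
    · exact Or.inr (Or.inr ⟨h, h'⟩)
  · rintro (rfl | rfl | ⟨h1, h2⟩)
    · exact ⟨le_refl _, le_of_lt hij⟩
    · exact ⟨le_of_lt hij, le_refl _⟩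
    · exact ⟨le_of_lt h1, le_of_lt h2⟩

lemma mul_entry_lt {A B : Matrix (Fin n) (Fin n) (LaurentSeries K)}
    (hA : Unitri A) (hB : Unitri B) {i j : Fin n} (hij : i < j) :
    (A * B) i j = A i j + B i j + ∑ r ∈ Finset.Ioo i j, A i r * B r j := by
  rw [mul_entry_Icc hA.2 hB.2 (le_of_lt hij), Icc_eq_insert hij]
  rw [Finset.sum_insert (by simp [Finset.mem_Ioo, hij.ne]), Finset.sum_insert (by simp)]
  rw [hA.1 i, hB.1 j, one_mul, mul_one]
  ring

lemma unitri_mul {A B : Matrix (Fin n) (Fin n) (LaurentSeries K)}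
    (hA : Unitri A) (hB : Unitri B) : Unitri (A * B) :=
  ⟨fun i => by rw [mul_diag hA.2 hB.2, hA.1, hB.1, one_mul],
   fun i j hij => UT_mul hA.2 hB.2 hij⟩

lemma unitri_det {A : Matrix (Fin n) (Fin n) (LaurentSeries K)} (hA : Unitri A) : A.det = 1 := by
  rw [Matrix.det_of_upperTriangular hA.2]
  exact Finset.prod_eq_one fun i _ => hA.1 i

lemma unitri_isUnit_det {A : Matrix (Fin n) (Fin n) (LaurentSeries K)} (hA : Unitri A) :
    IsUnit A.det := by rw [unitri_det hA]; exact isUnit_one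

lemma unitri_inv {A : Matrix (Fin n) (Fin n) (LaurentSeries K)} (hA : Unitri A) : Unitri A⁻¹ := by
  haveI := A.invertibleOfIsUnitDet (unitri_isUnit_det hA)
  have hUT : ∀ i j : Fin n, j < i → A⁻¹ i j = 0 :=
    Matrix.blockTriangular_inv_of_blockTriangular hA.2
  refine ⟨fun i => ?_, hUT⟩
  have h1 : (A⁻¹ * A) i i = 1 := by
    rw [Matrix.nonsing_inv_mul A (unitri_isUnit_det hA), Matrix.one_apply_eq]
  rwa [mul_diag hUT hA.2, hA.1, mul_one] at h1

lemma nonneg_det {A : Matrix (Fin n) (Fin n) (LaurentSeries K)}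
    (h : ∀ p q : Fin n, Nonneg (A p q)) : Nonneg A.det := by
  rw [Matrix.det_apply]
  refine nonneg_sum _ _ fun τ _ => ?_
  rcases Int.units_eq_one_or (Equiv.Perm.sign τ) with hs | hs
  · have : Equiv.Perm.sign τ • ∏ i, A (τ i) i = ∏ i, A (τ i) i := by
      simp [hs, Units.smul_def]
    rw [this]
    exact nonneg_prod _ _ fun i _ => h _ _
  · have : Equiv.Perm.sign τ • ∏ i, A (τ i) i = -∏ i, A (τ i) i := by
      simp [hs, Units.smul_def]
    rw [this]
    exact nonneg_neg (nonneg_prod _ _ fun i _ => h _ _)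

lemma nonneg_inv {A : Matrix (Fin n) (Fin n) (LaurentSeries K)} (hA : Unitri A)
    (h : ∀ p q : Fin n, Nonneg (A p q)) : ∀ p q : Fin n, Nonneg (A⁻¹ p q) := by
  intro a b
  rw [Matrix.inv_def, unitri_det hA, Ring.inverse_one, one_smul, Matrix.adjugate_apply]
  refine nonneg_det fun p q => ?_
  rw [Matrix.updateRow_apply]
  split
  · rcases eq_or_ne a q with rfl | hq
    · simp only [Pi.single_eq_same]; exact nonneg_one
    · rw [Pi.single_eq_of_ne (Ne.symm hq)]; exact nonneg_zero
  · exact h p q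

/-! ### The twisted conjugation map and its inverse -/

section Main

variable (p e : ℕ) [hp : Fact p.Prime] [CharP K p]
variable (σ : LaurentSeries K → LaurentSeries K)

lemma T_entry (ν : Fin n → ℤ) (g : Matrix (Fin n) (Fin n) (LaurentSeries K)) (i j : Fin n) :
    (epsDiag K ν * g.map σ * epsDiag K (fun i => -ν i)) i j
      = eps K ^ (ν i - ν j) * σ (g i j) := by
  rw [epsDiag, epsDiag, Matrix.mul_diagonal, Matrix.diagonal_mul, Matrix.map_apply]
  rw [sub_eq_add_neg, zpow_add₀ (eps_ne_zero (K := K))]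
  ring

lemma T_unitri (hσ : IsFrobenius K (p ^ e) σ) (ν : Fin n → ℤ)
    {g : Matrix (Fin n) (Fin n) (LaurentSeries K)} (hg : Unitri g) :
    Unitri (epsDiag K ν * g.map σ * epsDiag K (fun i => -ν i)) := by
  constructor
  · intro i
    rw [T_entry, hg.1 i, frob_one p e σ hσ, sub_self, zpow_zero, one_mul]
  · intro i j hij
    rw [T_entry, hg.2 i j hij, frob_zero p e σ hσ, mul_zero]

lemma T_nonneg (hσ : IsFrobenius K (p ^ e) σ) (ν : Fin n → ℤ) (hν : StrictDominant ν)
    {g : Matrix (Fin n) (Fin n) (LaurentSeries K)} (hg : Unitri g)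
    (hg' : ∀ a b : Fin n, Nonneg (g a b)) (i j : Fin n) :
    Nonneg ((epsDiag K ν * g.map σ * epsDiag K (fun i => -ν i)) i j) := by
  rw [T_entry]
  rcases lt_trichotomy i j with h | rfl | h
  · have hd : 0 ≤ ν i - ν j := by have := hν i j h; omega
    rw [eps_zpow]
    exact nonneg_mul (nonneg_single hd 1) (frob_nonneg p e σ hσ (hg' i j))
  · rw [hg.1 i, frob_one p e σ hσ, sub_self, zpow_zero, one_mul]
    exact nonneg_one
  · rw [hg.2 i j h, frob_zero p e σ hσ, mul_zero]
    exact nonneg_zero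

variable {σ}

/-- The entries of the preimage of `u` under `f_ν`, built by recursion on `j - i`. -/
def ent (ν : Fin n → ℤ) (hν : StrictDominant ν)
    (u : Matrix (Fin n) (Fin n) (LaurentSeries K)) (i j : Fin n) : LaurentSeries K :=
  if h : i < j then
    sol p e (ν i - ν j) (by have := hν i j h; omega)
      (-(u i j + ∑ r ∈ (Finset.Ioo i j).attach,
          ent ν hν u i r.1 * u r.1 j))
  else if i = j then 1 else 0
termination_by (j : ℕ) - (i : ℕ)
decreasing_by
  have hr := r.2
  rw [Finset.mem_Ioo] at hr
  have h1 : (i : ℕ) < (r.1 : ℕ) := hr.1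
  have h2 : (r.1 : ℕ) < (j : ℕ) := hr.2
  omega

lemma ent_lt (ν : Fin n → ℤ) (hν : StrictDominant ν)
    (u : Matrix (Fin n) (Fin n) (LaurentSeries K)) {i j : Fin n} (h : i < j) :
    ent p e ν hν u i j = sol p e (ν i - ν j) (by have := hν i j h; omega)
      (-(u i j + ∑ r ∈ Finset.Ioo i j, ent p e ν hν u i r * u r j)) := by
  rw [ent, dif_pos h,
    ← Finset.sum_attach (Finset.Ioo i j) (fun r => ent p e ν hν u i r * u r j)]

lemma ent_diag (ν : Fin n → ℤ) (hν : StrictDominant ν)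
    (u : Matrix (Fin n) (Fin n) (LaurentSeries K)) (i : Fin n) :
    ent p e ν hν u i i = 1 := by
  rw [ent, dif_neg (lt_irrefl i), if_pos rfl]

lemma ent_gt (ν : Fin n → ℤ) (hν : StrictDominant ν)
    (u : Matrix (Fin n) (Fin n) (LaurentSeries K)) {i j : Fin n} (h : j < i) :
    ent p e ν hν u i j = 0 := by
  rw [ent, dif_neg (by omega), if_neg (by omega)]

lemma ent_unitri (ν : Fin n → ℤ) (hν : StrictDominant ν)
    (u : Matrix (Fin n) (Fin n) (LaurentSeries K)) :
    Unitri (Matrix.of (ent p e ν hν u)) :=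
  ⟨fun i => ent_diag p e ν hν u i, fun _ _ h => ent_gt p e ν hν u h⟩

lemma key_eq (hσ : IsFrobenius K (p ^ e) σ) (ν : Fin n → ℤ) (hν : StrictDominant ν)
    {u : Matrix (Fin n) (Fin n) (LaurentSeries K)} (hu : Unitri u) :
    (Matrix.of (ent p e ν hν u)) * u
      = epsDiag K ν * (Matrix.of (ent p e ν hν u)).map σ
          * epsDiag K (fun i => -ν i) := by
  set H := Matrix.of (ent p e ν hν u) with hH
  have hHu : Unitri H := ent_unitri p e ν hν u
  apply Matrix.ext
  intro i j
  rw [T_entry]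
  rcases lt_trichotomy i j with h | rfl | h
  · have hd : 1 ≤ ν i - ν j := by have := hν i j h; omega
    rw [mul_entry_lt hHu hu h]
    have hent : H i j = sol p e (ν i - ν j) hd
        (-(u i j + ∑ r ∈ Finset.Ioo i j, H i r * u r j)) := ent_lt p e ν hν u h
    have hspec := sol_spec p e σ hσ (ν i - ν j) hd
      (-(u i j + ∑ r ∈ Finset.Ioo i j, H i r * u r j))
    rw [← hent] at hspec
    linear_combination hspec
  · rw [mul_diag hHu.2 hu.2, hHu.1 i, hu.1 i, one_mul, frob_one p e σ hσ,
      sub_self, zpow_zero, one_mul]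
  · rw [UT_mul hHu.2 hu.2 h, hH]
    rw [Matrix.of_apply, ent_gt p e ν hν u h, frob_zero p e σ hσ, mul_zero]

lemma fnu_of_ent (hσ : IsFrobenius K (p ^ e) σ) (ν : Fin n → ℤ) (hν : StrictDominant ν)
    {u : Matrix (Fin n) (Fin n) (LaurentSeries K)} (hu : Unitri u) :
    fnu σ ν (Matrix.of (ent p e ν hν u)) = u := by
  set H := Matrix.of (ent p e ν hν u) with hH
  have hHu : Unitri H := ent_unitri p e ν hν u
  have h1 : fnu σ ν H = H⁻¹ * (epsDiag K ν * H.map σ * epsDiag K (fun i => -ν i)) := by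
    rw [fnu]
    simp only [Matrix.mul_assoc]
  rw [h1, ← key_eq p e hσ ν hν hu, Matrix.nonsing_inv_mul_cancel_left _ _ (unitri_isUnit_det hHu)]

lemma ent_nonneg (ν : Fin n → ℤ) (hν : StrictDominant ν)
    {u : Matrix (Fin n) (Fin n) (LaurentSeries K)}
    (hu : ∀ a b : Fin n, Nonneg (u a b)) :
    ∀ N : ℕ, ∀ i j : Fin n, (j : ℕ) - (i : ℕ) < N → Nonneg (ent p e ν hν u i j) := by
  intro N
  induction N with
  | zero => intro i j h; omega
  | succ N ih =>
    intro i j hij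
    rcases lt_trichotomy i j with h | rfl | h
    · rw [ent_lt p e ν hν u h]
      refine sol_nonneg p e _ _ _ (nonneg_neg (nonneg_add (hu i j) (nonneg_sum _ _ ?_)))
      intro r hr
      rw [Finset.mem_Ioo] at hr
      refine nonneg_mul (ih i r ?_) (hu r j)
      have h1 : (i : ℕ) < (r : ℕ) := hr.1
      have h2 : (r : ℕ) < (j : ℕ) := hr.2
      omega
    · rw [ent_diag]; exact nonneg_one
    · rw [ent_gt p e ν hν u h]; exact nonneg_zero

lemma fnu_unitri (hσ : IsFrobenius K (p ^ e) σ) (ν : Fin n → ℤ)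
    {g : Matrix (Fin n) (Fin n) (LaurentSeries K)} (hg : Unitri g) :
    Unitri (fnu σ ν g) := by
  have h1 : fnu σ ν g = g⁻¹ * (epsDiag K ν * g.map σ * epsDiag K (fun i => -ν i)) := by
    rw [fnu]; simp only [Matrix.mul_assoc]
  rw [h1]
  exact unitri_mul (unitri_inv hg) (T_unitri p e σ hσ ν hg)

lemma fnu_nonneg (hσ : IsFrobenius K (p ^ e) σ) (ν : Fin n → ℤ) (hν : StrictDominant ν)
    {g : Matrix (Fin n) (Fin n) (LaurentSeries K)} (hg : Unitri g)
    (hg' : ∀ a b : Fin n, Nonneg (g a b)) :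
    ∀ a b : Fin n, Nonneg ((fnu σ ν g) a b) := by
  have h1 : fnu σ ν g = g⁻¹ * (epsDiag K ν * g.map σ * epsDiag K (fun i => -ν i)) := by
    rw [fnu]; simp only [Matrix.mul_assoc]
  intro a b
  rw [h1, Matrix.mul_apply]
  refine nonneg_sum _ _ fun r _ => nonneg_mul (nonneg_inv hg hg' a r) ?_
  exact T_nonneg p e σ hσ ν hν hg hg' r b

lemma fnu_inj (hσ : IsFrobenius K (p ^ e) σ) (ν : Fin n → ℤ) (hν : StrictDominant ν)
    {h1 h2 : Matrix (Fin n) (Fin n) (LaurentSeries K)} (hh1 : Unitri h1) (hh2 : Unitri h2)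
    (heq : fnu σ ν h1 = fnu σ ν h2) : h1 = h2 := by
  set u := fnu σ ν h1 with hu_def
  have hu : Unitri u := fnu_unitri p e hσ ν hh1
  have key : ∀ h : Matrix (Fin n) (Fin n) (LaurentSeries K), Unitri h → fnu σ ν h = u →
      h * u = epsDiag K ν * h.map σ * epsDiag K (fun i => -ν i) := by
    intro h hh hf
    have : epsDiag K ν * h.map σ * epsDiag K (fun i => -ν i) = h * fnu σ ν h := by
      rw [fnu]
      simp only [Matrix.mul_assoc]
      rw [Matrix.mul_nonsing_inv_cancel_left _ _ (unitri_isUnit_det hh)]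
    rw [this, hf]
  have k1 := key h1 hh1 rfl
  have k2 := key h2 hh2 heq.symm
  have entry_eq : ∀ h : Matrix (Fin n) (Fin n) (LaurentSeries K), Unitri h →
      (h * u = epsDiag K ν * h.map σ * epsDiag K (fun i => -ν i)) →
      ∀ i j : Fin n, i < j →
        h i j - eps K ^ (ν i - ν j) * σ (h i j)
          = -(u i j + ∑ r ∈ Finset.Ioo i j, h i r * u r j) := by
    intro h hh hk i j hij
    have := congrFun (congrFun hk i) j
    rw [mul_entry_lt hh hu hij, T_entry] at this
    linear_combination this
  have e1 := entry_eq h1 hh1 k1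
  have e2 := entry_eq h2 hh2 k2
  have main : ∀ N : ℕ, ∀ i j : Fin n, (j : ℕ) - (i : ℕ) < N → h1 i j = h2 i j := by
    intro N
    induction N with
    | zero => intro i j h; omega
    | succ N ih =>
      intro i j hij
      rcases lt_trichotomy i j with h | rfl | h
      · have hd : 1 ≤ ν i - ν j := by have := hν i j h; omega
        have hsum : ∑ r ∈ Finset.Ioo i j, h1 i r * u r j
            = ∑ r ∈ Finset.Ioo i j, h2 i r * u r j := by
          refine Finset.sum_congr rfl fun r hr => ?_
          rw [Finset.mem_Ioo] at hr
          have h1' : (i : ℕ) < (r : ℕ) := hr.1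
          have h2' : (r : ℕ) < (j : ℕ) := hr.2
          rw [ih i r (by omega)]
        refine sol_unique p e σ hσ (ν i - ν j) hd ?_
        rw [e1 i j h, e2 i j h, hsum]
      · rw [hh1.1 i, hh2.1 i]
      · rw [hh1.2 i j h, hh2.2 i j h]
  apply Matrix.ext
  intro i j
  exact main ((j : ℕ) - (i : ℕ) + 1) i j (by omega)

end Main

end FnuAux

open FnuAux in
/-- if `ν` is strictly dominant, then `f_ν : U_1 → U_1` is a bijection and
`f_ν(U(o_L)) = U(o_L)`. -/
theorem fnu_bijective (F : Type*) [Field F] [Fintype F] (n : ℕ) (hn : 2 ≤ n)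
    (σ : LaurentSeries (AlgebraicClosure F) → LaurentSeries (AlgebraicClosure F))
    (hσ : IsFrobenius (AlgebraicClosure F) (Fintype.card F) σ)
    (ν : Fin n → ℤ) (hν : StrictDominant ν) :
    Set.BijOn (fnu σ ν) {g | Unitri g} {g | Unitri g} ∧
    fnu σ ν '' UO (AlgebraicClosure F) n = UO (AlgebraicClosure F) n := by
  classical
  set K := AlgebraicClosure F
  set p := ringChar F with hpdef
  haveI : CharP F p := ringChar.charP F
  obtain ⟨m, hprime, hcard⟩ := FiniteField.card F p
  haveI : Fact p.Prime := ⟨hprime⟩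
  haveI : CharP K p := charP_of_injective_algebraMap (algebraMap F K).injective p
  have hσ' : IsFrobenius K (p ^ (m : ℕ)) σ := hcard ▸ hσ
  constructor
  · refine ⟨fun g hg => fnu_unitri p m hσ' ν hg, fun g1 hg1 g2 hg2 heq =>
      fnu_inj p m hσ' ν hν hg1 hg2 heq, fun u hu => ?_⟩
    exact ⟨Matrix.of (ent p m ν hν u), ent_unitri p m ν hν u,
      fnu_of_ent p m hσ' ν hν hu⟩
  · ext u
    constructor
    · rintro ⟨g, ⟨hg, hg'⟩, rfl⟩
      have hg'' : ∀ a b : Fin n, Nonneg (g a b) := fun a b => nonneg_iff.mp (hg' a b)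
      exact ⟨fnu_unitri p m hσ' ν hg,
        fun a b => nonneg_iff.mpr (fnu_nonneg p m hσ' ν hν hg hg'' a b)⟩
    · rintro ⟨hu, hu'⟩
      refine ⟨Matrix.of (ent p m ν hν u),
        ⟨ent_unitri p m ν hν u, fun a b => nonneg_iff.mpr ?_⟩,
        fnu_of_ent p m hσ' ν hν hu⟩
      have hu'' : ∀ a b : Fin n, Nonneg (u a b) := fun a b => nonneg_iff.mp (hu' a b)
      exact ent_nonneg p m ν hν hu'' ((b : ℕ) - (a : ℕ) + 1) a b (by omega)
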